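/- arXiv:2602.23484 — 2 statements merged into one kernel-verified Lean document; each statement's English description precedes it below -/
import Mathlib

section
/- Let E_i[ρ] = (ρ + X_{2i} ρ X_{2i})/2 be the full even-site dephasing channel and ρ_c = E[|ψ⟩⟨ψ|] the decohered cluster state (h = 0). Then the Rényi-2 correlator Tr(ρ_c Z_{2r-1}Z_{2r'+1} ρ_c Z_{2r-1}Z_{2r'+1}) / Tr(ρ_c²) = 1 for all r < r'. -/
open Matrix
open Fin.NatCast
open scoped symmDiff

/-- The operator `∏_{i ∈ A} X_i` flipping the spins in the set `A`
(in the `Z` basis of `(ℂ²)^{⊗L}`, realized as functions `Fin L → Fin 2`). -/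
def flipSet (L : ℕ) (A : Finset (Fin L)) :
    Matrix (Fin L → Fin 2) (Fin L → Fin 2) ℂ :=
  fun f g => if g = (fun j => if j ∈ A then 1 - f j else f j) then 1 else 0

/-- Pauli `X` on site `i`. -/
def pauliX (L : ℕ) (i : Fin L) : Matrix (Fin L → Fin 2) (Fin L → Fin 2) ℂ :=
  flipSet L {i}

/-- Pauli `Z` on site `i`. -/
def pauliZ (L : ℕ) (i : Fin L) : Matrix (Fin L → Fin 2) (Fin L → Fin 2) ℂ :=
  Matrix.diagonal (fun f => if f i = 0 then 1 else -1)

/-- The ZXZ cluster stabilizer `S_i = Z_{i-1} X_i Z_{i+1}` (periodic boundary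
conditions). -/
noncomputable def stab (L : ℕ) [NeZero L] (i : Fin L) :
    Matrix (Fin L → Fin 2) (Fin L → Fin 2) ℂ :=
  pauliZ L (i - 1) * pauliX L i * pauliZ L (i + 1)

/-- The set of even sites of the chain. -/
def evens (L : ℕ) : Finset (Fin L) := Finset.univ.filter fun j => j.val % 2 = 0

/-- The decohered cluster state `ρ_c = E[|ψ⟩⟨ψ|]`, where
`E = ∏_i E_{2i}` with `E_i[ρ] = (ρ + X_{2i} ρ X_{2i})/2` dephases all even
sites in the `X` basis; expanded, `ρ_c = 2^{-|evens|} Σ_{A ⊆ evens} X_A ρ X_A`. -/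
noncomputable def rhoc (L : ℕ) (ψ : (Fin L → Fin 2) → ℂ) :
    Matrix (Fin L → Fin 2) (Fin L → Fin 2) ℂ :=
  ((1 : ℂ) / 2 ^ (evens L).card) •
    ∑ A ∈ (evens L).powerset, flipSet L A * vecMulVec ψ (star ψ) * flipSet L A

/-! ### Auxiliary machinery -/

/-- The spin-flip action on classical configurations. -/
def sg (L : ℕ) (A : Finset (Fin L)) (f : Fin L → Fin 2) : Fin L → Fin 2 :=
  fun j => if j ∈ A then 1 - f j else f j

lemma flip_apply (L : ℕ) (A : Finset (Fin L)) (f g : Fin L → Fin 2) :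
    flipSet L A f g = if g = sg L A f then 1 else 0 := rfl

lemma fin2_sub_sub (x : Fin 2) : 1 - (1 - x) = x := by fin_cases x <;> rfl

lemma sg_sg (L : ℕ) (A B : Finset (Fin L)) (f : Fin L → Fin 2) :
    sg L A (sg L B f) = sg L (A ∆ B) f := by
  funext j
  simp only [sg, Finset.mem_symmDiff]
  by_cases hA : j ∈ A <;> by_cases hB : j ∈ B <;> simp [hA, hB, fin2_sub_sub]

lemma sg_invol (L : ℕ) (A : Finset (Fin L)) (f : Fin L → Fin 2) :
    sg L A (sg L A f) = f := by
  rw [sg_sg, symmDiff_self]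
  funext j; simp [sg]

lemma sg_empty (L : ℕ) (f : Fin L → Fin 2) : sg L ∅ f = f := by
  funext j; simp [sg]

lemma sg_eq_iff (L : ℕ) (A : Finset (Fin L)) (f g : Fin L → Fin 2) :
    g = sg L A f ↔ f = sg L A g := by
  constructor <;> rintro rfl <;> rw [sg_invol]

lemma flip_mulVec (L : ℕ) (A : Finset (Fin L)) (v : (Fin L → Fin 2) → ℂ)
    (f : Fin L → Fin 2) : (flipSet L A *ᵥ v) f = v (sg L A f) := by
  simp [mulVec, dotProduct, flip_apply, ite_mul]

lemma flip_mul (L : ℕ) (A : Finset (Fin L)) (M : Matrix (Fin L → Fin 2) (Fin L → Fin 2) ℂ)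
    (f g : Fin L → Fin 2) : (flipSet L A * M) f g = M (sg L A f) g := by
  simp [Matrix.mul_apply, flip_apply, ite_mul]

lemma mul_flip (L : ℕ) (A : Finset (Fin L)) (M : Matrix (Fin L → Fin 2) (Fin L → Fin 2) ℂ)
    (f g : Fin L → Fin 2) : (M * flipSet L A) f g = M f (sg L A g) := by
  simp only [Matrix.mul_apply, flip_apply]
  simp only [sg_eq_iff L A _ g]
  simp [mul_ite]

lemma flip_mul_flip (L : ℕ) (A B : Finset (Fin L)) :
    flipSet L A * flipSet L B = flipSet L (A ∆ B) := by
  ext f g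
  rw [flip_mul, flip_apply, flip_apply, sg_sg, symmDiff_comm]

/-- Sign function on a classical bit. -/
noncomputable def sgn (x : Fin 2) : ℂ := if x = 0 then 1 else -1

lemma sgn_sq (x : Fin 2) : sgn x * sgn x = 1 := by fin_cases x <;> norm_num [sgn]

lemma sgn_conj (x : Fin 2) : (starRingEnd ℂ) (sgn x) = sgn x := by
  fin_cases x <;> simp [sgn]

lemma pauliZ_eq (L : ℕ) (i : Fin L) : pauliZ L i = diagonal (fun f => sgn (f i)) := rfl

lemma diag_mulVec {n : Type*} [Fintype n] [DecidableEq n] (d : n → ℂ) (v : n → ℂ) (f : n) :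
    (Matrix.diagonal d *ᵥ v) f = d f * v f := by
  simp [mulVec_diagonal]

lemma sg_single_apply (L : ℕ) (i j : Fin L) (f : Fin L → Fin 2) (h : j ≠ i) :
    sg L {i} f j = f j := by simp [sg, h]

lemma sg_not_mem_apply (L : ℕ) (A : Finset (Fin L)) (f : Fin L → Fin 2) (j : Fin L)
    (h : j ∉ A) : sg L A f j = f j := by simp [sg, h]

/-- The stabilizer eigenvalue relation, pointwise form. -/
lemma stab_rel (L : ℕ) [NeZero L] (hL2 : 2 ≤ L) (ψ : (Fin L → Fin 2) → ℂ)
    (hstab : ∀ i : Fin L, stab L i *ᵥ ψ = ψ) (i : Fin L) (f : Fin L → Fin 2) :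
    ψ (sg L {i} f) = sgn (f (i - 1)) * sgn (f (i + 1)) * ψ f := by
  have hne : i + 1 ≠ i := by
    intro h
    have hi := i.isLt
    have hv : (i.val + 1) % L = i.val := by
      have h2 := congrArg Fin.val h
      rw [Fin.add_def] at h2
      simpa [Nat.mod_eq_of_lt (show (1:ℕ) < L by omega)] using h2
    rcases Nat.lt_or_ge (i.val + 1) L with hlt | hge
    · rw [Nat.mod_eq_of_lt hlt] at hv; omega
    · have h1 : i.val + 1 = L := by omega
      rw [h1, Nat.mod_self] at hv; omega
  have h := congrFun (hstab i) f
  rw [show stab L i = pauliZ L (i-1) * pauliX L i * pauliZ L (i+1) from rfl] at h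
  rw [← mulVec_mulVec, ← mulVec_mulVec] at h
  rw [pauliZ_eq, diag_mulVec, show pauliX L i = flipSet L {i} from rfl,
    flip_mulVec, pauliZ_eq, diag_mulVec, sg_single_apply L i (i+1) f hne] at h
  calc ψ (sg L {i} f)
      = (sgn (f (i-1)) * sgn (f (i-1))) * ((sgn (f (i+1)) * sgn (f (i+1))) * ψ (sg L {i} f)) := by
        rw [sgn_sq, sgn_sq]; ring
    _ = sgn (f (i-1)) * sgn (f (i+1)) * (sgn (f (i-1)) * (sgn (f (i+1)) * ψ (sg L {i} f))) := by
        ring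
    _ = sgn (f (i-1)) * sgn (f (i+1)) * ψ f := by rw [h]

section FinCast
variable (L : ℕ) [NeZero L]

lemma cast_succ_sub_one (a : ℕ) : (↑(a+1) : Fin L) - 1 = ↑a := by
  push_cast
  abel

lemma cast_add_one (a : ℕ) : (↑(a) : Fin L) + 1 = ↑(a+1) := by
  push_cast
  ring
end FinCast

/-- The set of even sites between `2r` and `2m`. -/
def Bset (L r m : ℕ) : Finset (Fin L) :=
  Finset.univ.filter fun j => j.val % 2 = 0 ∧ 2*r ≤ j.val ∧ j.val ≤ 2*m

lemma mem_Bset (L r m : ℕ) (j : Fin L) :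
    j ∈ Bset L r m ↔ j.val % 2 = 0 ∧ 2*r ≤ j.val ∧ j.val ≤ 2*m := by
  simp [Bset]

lemma Bset_base (L r : ℕ) [NeZero L] (hr : 0 < r) (h : 2*r < L) :
    Bset L r r = {(↑(2*r) : Fin L)} := by
  ext j
  simp only [mem_Bset, Finset.mem_singleton]
  constructor
  · rintro ⟨_, h1, h2⟩
    have : j.val = 2*r := by omega
    exact Fin.ext (by rw [Fin.val_cast_of_lt h, this])
  · rintro rfl
    rw [Fin.val_cast_of_lt h]
    omega

lemma Bset_step (L r m : ℕ) [NeZero L] (hrm : r ≤ m) (h : 2*m+2 < L) :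
    Bset L r (m+1) = insert (↑(2*m+2) : Fin L) (Bset L r m) := by
  ext j
  simp only [mem_Bset, Finset.mem_insert]
  constructor
  · rintro ⟨he, h1, h2⟩
    rcases Nat.lt_or_ge j.val (2*m+1) with hlt | hge
    · exact Or.inr ⟨he, h1, by omega⟩
    · left
      have : j.val = 2*m+2 := by omega
      exact Fin.ext (by rw [Fin.val_cast_of_lt h, this])
  · rintro (rfl | ⟨he, h1, h2⟩)
    · rw [Fin.val_cast_of_lt h]; omega
    · exact ⟨he, h1, by omega⟩

lemma not_mem_Bset_odd (L r m a : ℕ) [NeZero L] (ha : a % 2 = 1) (haL : a < L) :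
    (↑a : Fin L) ∉ Bset L r m := by
  rw [mem_Bset, Fin.val_cast_of_lt haL]
  omega

lemma not_mem_Bset_big (L r m a : ℕ) [NeZero L] (ha : 2*m < a) (haL : a < L) :
    (↑a : Fin L) ∉ Bset L r m := by
  rw [mem_Bset, Fin.val_cast_of_lt haL]
  omega

lemma sg_insert (L : ℕ) (c : Fin L) (S : Finset (Fin L)) (hc : c ∉ S) (f : Fin L → Fin 2) :
    sg L (insert c S) f = sg L {c} (sg L S f) := by
  rw [sg_sg]
  have h : ({c} ∆ S : Finset (Fin L)) = insert c S := by
    ext j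
    simp only [Finset.mem_symmDiff, Finset.mem_singleton, Finset.mem_insert]
    by_cases h : j = c
    · subst h; tauto
    · tauto
  rw [h]

/-- The telescoping product of stabilizers: flipping the block of even sites
between `2r` and `2m` multiplies `ψ` by the signs at the two boundary odd
sites. -/
lemma keyInd (L r r' : ℕ) [NeZero L]
    (hr : 0 < r) (hrr' : r < r') (hbound : 2 * r' + 1 < L)
    (ψ : (Fin L → Fin 2) → ℂ)
    (hrel : ∀ (i : Fin L) (f : Fin L → Fin 2),
      ψ (sg L {i} f) = sgn (f (i - 1)) * sgn (f (i + 1)) * ψ f) :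
    ∀ m, r ≤ m → m ≤ r' → ∀ f,
      ψ (sg L (Bset L r m) f)
        = sgn (f ((↑(2*r) : Fin L) - 1)) * sgn (f (↑(2*m+1) : Fin L)) * ψ f := by
  intro m hm
  induction m, hm using Nat.le_induction with
  | base =>
    intro _ f
    rw [Bset_base L r hr (by omega)]
    have h2 : (↑(2*r) : Fin L) + 1 = (↑(2*r+1) : Fin L) := cast_add_one L _
    rw [hrel (↑(2*r) : Fin L) f, h2]
  | succ m hm ih =>
    intro hm' f
    have hmL : 2*m+2 < L := by omega
    rw [Bset_step L r m hm (by omega),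
      sg_insert L _ _ (not_mem_Bset_big L r m (2*m+2) (by omega) (by omega)) f]
    set g := sg L (Bset L r m) f with hg
    rw [hrel (↑(2*m+2) : Fin L) g]
    have e1 : (↑(2*m+2) : Fin L) - 1 = (↑(2*m+1) : Fin L) := by
      rw [show 2*m+2 = (2*m+1)+1 from rfl, cast_succ_sub_one]
    have e2 : (↑(2*m+2) : Fin L) + 1 = (↑(2*m+3) : Fin L) := cast_add_one L _
    rw [e1, e2]
    have g1 : g (↑(2*m+1) : Fin L) = f (↑(2*m+1) : Fin L) :=
      sg_not_mem_apply L _ f _ (not_mem_Bset_odd L r m (2*m+1) (by omega) (by omega))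
    have g2 : g (↑(2*m+3) : Fin L) = f (↑(2*m+3) : Fin L) :=
      sg_not_mem_apply L _ f _ (not_mem_Bset_odd L r m (2*m+3) (by omega) (by omega))
    rw [g1, g2, ih (by omega) f]
    have e3 : 2*(m+1)+1 = 2*m+3 := by ring
    rw [e3]
    calc sgn (f ↑(2 * m + 1)) * sgn (f ↑(2 * m + 3)) *
          (sgn (f ((↑(2 * r) : Fin L) - 1)) * sgn (f ↑(2 * m + 1)) * ψ f)
        = (sgn (f ↑(2*m+1)) * sgn (f ↑(2*m+1))) *
            (sgn (f ((↑(2 * r) : Fin L) - 1)) * sgn (f ↑(2 * m + 3)) * ψ f) := by ring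
      _ = sgn (f ((↑(2 * r) : Fin L) - 1)) * sgn (f ↑(2 * m + 3)) * ψ f := by
          rw [sgn_sq]; ring

lemma flip_rho_flip_apply (L : ℕ) (A : Finset (Fin L)) (ψ : (Fin L → Fin 2) → ℂ)
    (f g : Fin L → Fin 2) :
    (flipSet L A * vecMulVec ψ (star ψ) * flipSet L A) f g
      = ψ (sg L A f) * (starRingEnd ℂ) (ψ (sg L A g)) := by
  rw [mul_flip, flip_mul, vecMulVec_apply]
  rfl

lemma odd_not_mem_of_subset_evens (L : ℕ) (A : Finset (Fin L)) (hA : A ⊆ evens L)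
    (j : Fin L) (hj : j.val % 2 = 1) : j ∉ A := by
  intro h
  have := hA h
  simp only [evens, Finset.mem_filter] at this
  omega

/-- The core conjugation identity: `Z_{i₁} Z_{i₂} ρ_c Z_{i₁} Z_{i₂} = ρ_c`. -/
lemma conj_rhoc (L : ℕ) (ψ : (Fin L → Fin 2) → ℂ)
    (i₁ i₂ : Fin L) (h₁ : i₁.val % 2 = 1) (h₂ : i₂.val % 2 = 1)
    (B : Finset (Fin L)) (hB : B ⊆ evens L)
    (key : ∀ h : Fin L → Fin 2, ψ (sg L B h) = sgn (h i₁) * sgn (h i₂) * ψ h) :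
    pauliZ L i₁ * pauliZ L i₂ * rhoc L ψ * (pauliZ L i₁ * pauliZ L i₂) = rhoc L ψ := by
  set D : (Fin L → Fin 2) → ℂ := fun f => sgn (f i₁) * sgn (f i₂) with hD
  have hZZ : pauliZ L i₁ * pauliZ L i₂ = diagonal D := by
    rw [pauliZ_eq, pauliZ_eq, diagonal_mul_diagonal]
  rw [hZZ]
  unfold rhoc
  rw [Matrix.mul_smul, Matrix.smul_mul]
  congr 1
  rw [Finset.mul_sum, Finset.sum_mul]
  have hterm : ∀ A ∈ (evens L).powerset,
      diagonal D * (flipSet L A * vecMulVec ψ (star ψ) * flipSet L A) * diagonal D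
        = flipSet L (A ∆ B) * vecMulVec ψ (star ψ) * flipSet L (A ∆ B) := by
    intro A hA
    rw [Finset.mem_powerset] at hA
    ext f g
    rw [mul_diagonal, diagonal_mul, flip_rho_flip_apply, flip_rho_flip_apply]
    have hsg : ∀ h : Fin L → Fin 2, sg L (A ∆ B) h = sg L B (sg L A h) := by
      intro h
      rw [sg_sg, symmDiff_comm]
    rw [hsg f, hsg g, key, key]
    have hD1 : ∀ h : Fin L → Fin 2, D (sg L A h) = D h := by
      intro h
      simp only [hD]
      rw [sg_not_mem_apply L A h i₁ (odd_not_mem_of_subset_evens L A hA i₁ h₁),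
        sg_not_mem_apply L A h i₂ (odd_not_mem_of_subset_evens L A hA i₂ h₂)]
    have hDconj : ∀ h : Fin L → Fin 2, (starRingEnd ℂ) (D h) = D h := fun h => by
      simp only [hD]
      rw [_root_.map_mul, sgn_conj, sgn_conj]
    rw [show sgn (sg L A f i₁) * sgn (sg L A f i₂) = D (sg L A f) from rfl,
      show sgn (sg L A g i₁) * sgn (sg L A g i₂) = D (sg L A g) from rfl,
      _root_.map_mul, hDconj, hD1, hD1]
    ring
  rw [Finset.sum_congr rfl hterm]
  have hconv : ∀ A ∈ (evens L).powerset,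
      flipSet L (A ∆ B) * vecMulVec ψ (star ψ) * flipSet L (A ∆ B)
        = (fun C => flipSet L C * vecMulVec ψ (star ψ) * flipSet L C) (A ∆ B) :=
    fun A _ => rfl
  refine Finset.sum_nbij' (fun A => A ∆ B) (fun A => A ∆ B) ?_ ?_ ?_ ?_ hconv
  · intro A hA
    rw [Finset.mem_powerset] at hA ⊢
    exact le_trans symmDiff_le_sup (sup_le hA hB)
  · intro A hA
    rw [Finset.mem_powerset] at hA ⊢
    exact le_trans symmDiff_le_sup (sup_le hA hB)
  · intro A _
    show A ∆ B ∆ B = A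
    simp
  · intro A _
    show A ∆ B ∆ B = A
    simp

lemma rhoc_apply (L : ℕ) (ψ : (Fin L → Fin 2) → ℂ) (f g : Fin L → Fin 2) :
    rhoc L ψ f g = ((1 : ℂ) / 2 ^ (evens L).card) *
      ∑ A ∈ (evens L).powerset, ψ (sg L A f) * (starRingEnd ℂ) (ψ (sg L A g)) := by
  unfold rhoc
  rw [Matrix.smul_apply, Matrix.sum_apply]
  rw [Finset.sum_congr rfl (fun A _ => flip_rho_flip_apply L A ψ f g)]
  simp [smul_eq_mul]

lemma rhoc_herm (L : ℕ) (ψ : (Fin L → Fin 2) → ℂ) (f g : Fin L → Fin 2) :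
    rhoc L ψ g f = (starRingEnd ℂ) (rhoc L ψ f g) := by
  rw [rhoc_apply, rhoc_apply, _root_.map_mul, map_sum]
  congr 1
  · rw [map_div₀, _root_.map_one, map_pow, Complex.conj_ofNat]
  · refine Finset.sum_congr rfl fun A _ => ?_
    rw [_root_.map_mul, Complex.conj_conj]
    ring

lemma rhoc_diag_pos (L : ℕ) (ψ : (Fin L → Fin 2) → ℂ) (f₀ : Fin L → Fin 2)
    (h₀ : ψ f₀ ≠ 0) : rhoc L ψ f₀ f₀ ≠ 0 := by
  rw [rhoc_apply]
  have hterm : ∀ A ∈ (evens L).powerset,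
      ψ (sg L A f₀) * (starRingEnd ℂ) (ψ (sg L A f₀))
        = ((Complex.normSq (ψ (sg L A f₀)) : ℝ) : ℂ) := by
    intro A _
    rw [Complex.mul_conj]
  rw [Finset.sum_congr rfl hterm, ← Complex.ofReal_sum]
  have hpos : 0 < ∑ A ∈ (evens L).powerset, Complex.normSq (ψ (sg L A f₀)) := by
    have h1 : 0 < Complex.normSq (ψ (sg L ∅ f₀)) := by
      rw [sg_empty]; exact Complex.normSq_pos.mpr h₀
    refine lt_of_lt_of_le h1 (Finset.single_le_sum
      (f := fun A => Complex.normSq (ψ (sg L A f₀)))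
      (fun A _ => Complex.normSq_nonneg _) ?_)
    simp
  intro h
  rcases mul_eq_zero.mp h with h | h
  · rw [div_eq_zero_iff] at h
    rcases h with h | h
    · exact one_ne_zero h
    · exact (pow_ne_zero _ (two_ne_zero)) h
  · rw [Complex.ofReal_eq_zero] at h
    exact absurd h (ne_of_gt hpos)

lemma trace_sq_ne (L : ℕ) (ψ : (Fin L → Fin 2) → ℂ) (hψ : ψ ≠ 0) :
    (rhoc L ψ * rhoc L ψ).trace ≠ 0 := by
  obtain ⟨f₀, h₀⟩ := Function.ne_iff.mp hψ
  have key : (rhoc L ψ * rhoc L ψ).trace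
      = ((∑ f, ∑ g, Complex.normSq (rhoc L ψ f g) : ℝ) : ℂ) := by
    rw [Matrix.trace]
    push_cast
    refine Finset.sum_congr rfl fun f _ => ?_
    rw [Matrix.diag_apply, Matrix.mul_apply]
    refine Finset.sum_congr rfl fun g _ => ?_
    rw [rhoc_herm L ψ f g, Complex.mul_conj]
  rw [key]
  rw [Complex.ofReal_ne_zero]
  refine ne_of_gt (Finset.sum_pos'
    (fun f _ => Finset.sum_nonneg fun g _ => Complex.normSq_nonneg _)
    ⟨f₀, Finset.mem_univ _, ?_⟩)
  refine Finset.sum_pos' (fun g _ => Complex.normSq_nonneg _) ⟨f₀, Finset.mem_univ _, ?_⟩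
  exact Complex.normSq_pos.mpr (rhoc_diag_pos L ψ f₀ (by simpa using h₀))

/-- For the decohered cluster state `ρ_c` (`h = 0`), the Rényi-2 correlator
`Tr(ρ_c Z_{2r-1}Z_{2r'+1} ρ_c Z_{2r-1}Z_{2r'+1}) / Tr(ρ_c²) = 1` for all
`r < r'`. -/
theorem stmt9 (L r r' : ℕ) [NeZero L] (hL : Even L)
    (hr : 0 < r) (hrr' : r < r') (hbound : 2 * r' + 1 < L)
    (ψ : (Fin L → Fin 2) → ℂ) (hψ : ψ ≠ 0)
    (hstab : ∀ i : Fin L, stab L i *ᵥ ψ = ψ) :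
    (rhoc L ψ * (pauliZ L ((2 * r : ℕ) - 1) * pauliZ L ((2 * r' + 1 : ℕ))) *
        rhoc L ψ * (pauliZ L ((2 * r : ℕ) - 1) * pauliZ L ((2 * r' + 1 : ℕ)))).trace /
      (rhoc L ψ * rhoc L ψ).trace = 1 := by
  have hL2 : 2 ≤ L := by omega
  set i₁ : Fin L := ((2 * r : ℕ) : Fin L) - 1 with hi₁
  set i₂ : Fin L := ((2 * r' + 1 : ℕ) : Fin L) with hi₂
  have hi₁' : i₁ = ((2*r - 1 : ℕ) : Fin L) := by
    rw [hi₁, show 2*r = (2*r-1)+1 by omega, cast_succ_sub_one, Nat.add_sub_cancel]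
  have h₁ : i₁.val % 2 = 1 := by
    rw [hi₁', Fin.val_cast_of_lt (by omega)]; omega
  have h₂ : i₂.val % 2 = 1 := by
    rw [hi₂, Fin.val_cast_of_lt (by omega)]; omega
  have hrel : ∀ (i : Fin L) (f : Fin L → Fin 2),
      ψ (sg L {i} f) = sgn (f (i - 1)) * sgn (f (i + 1)) * ψ f :=
    fun i f => stab_rel L hL2 ψ hstab i f
  have key : ∀ h : Fin L → Fin 2,
      ψ (sg L (Bset L r r') h) = sgn (h i₁) * sgn (h i₂) * ψ h := by
    intro h
    exact keyInd L r r' hr hrr' hbound ψ hrel r' (le_of_lt hrr') le_rfl h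
  have hB : Bset L r r' ⊆ evens L := by
    intro j hj
    rw [mem_Bset] at hj
    simp only [evens, Finset.mem_filter]
    exact ⟨Finset.mem_univ _, hj.1⟩
  have hco := conj_rhoc L ψ i₁ i₂ h₁ h₂ (Bset L r r') hB key
  have hnum : rhoc L ψ * (pauliZ L i₁ * pauliZ L i₂) * rhoc L ψ *
      (pauliZ L i₁ * pauliZ L i₂) = rhoc L ψ * rhoc L ψ := by
    set O := pauliZ L i₁ * pauliZ L i₂ with hO
    rw [mul_assoc (rhoc L ψ * O) (rhoc L ψ) O, mul_assoc (rhoc L ψ) O (rhoc L ψ * O),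
      ← mul_assoc O (rhoc L ψ) O]
    rw [show O * rhoc L ψ * O = rhoc L ψ from hco]
  rw [hnum, div_self (trace_sq_ne L ψ hψ)]
end

section
/- In the fixed-point decorated-domain-wall mixed state, the Rényi-2 correlator equals exactly 1: with weight constraint δ(ω_{g_{i-1}g_{i+1}^{-1}} = ω_{h_{i-1}h_{i+1}^{-1}}) for all odd i, the sum Σ_{{g},{h}} [∏ δ] · ω_{g_r}(s) ω_{g_{r'}}(s)^{-1} ω_{h_r}(s)^{-1} ω_{h_{r'}}(s) equals Σ_{{g},{h}} ∏ δ. -/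
open scoped Classical

/-- In the fixed-point decorated-domain-wall mixed state, the Rényi-2 correlator
equals exactly `1`: summing over pairs of configurations `g, h` on the even
sites of a finite cycle, subject to the constraint that the decorated charges
`ω_{g_{i-1} g_{i+1}⁻¹}` and `ω_{h_{i-1} h_{i+1}⁻¹}` agree at every odd site,
the phase-weighted sum
`Σ_{g,h} [∏ δ] ω_{g_r}(s) ω_{g_{r'}}(s)⁻¹ ω_{h_r}(s)⁻¹ ω_{h_{r'}}(s)`
equals the plain sum `Σ_{g,h} ∏ δ`. -/
theorem stmt12 (G : Type*) [Group G] [Fintype G] (S : Type*) [CommGroup S] [Fintype S]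
    (n : ℕ) [NeZero n] (ω : G →* (S →* Circle)) (s : S) (r r' : Fin n) :
    (∑ g : Fin n → G, ∑ h : Fin n → G,
        if (∀ k : Fin n, ω (g k * (g (k + 1))⁻¹) = ω (h k * (h (k + 1))⁻¹)) then
          ((ω (g r) s : ℂ) * ((ω (g r') s : ℂ))⁻¹ *
            ((ω (h r) s : ℂ))⁻¹ * (ω (h r') s : ℂ))
        else 0)
      = ∑ g : Fin n → G, ∑ h : Fin n → G,
          if (∀ k : Fin n, ω (g k * (g (k + 1))⁻¹) = ω (h k * (h (k + 1))⁻¹)) then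
            (1 : ℂ)
          else 0 := by
  refine Finset.sum_congr rfl fun g _ => Finset.sum_congr rfl fun h _ => ?_
  split_ifs with hc
  · set f : Fin n → (S →* Circle) := fun k => (ω (g k))⁻¹ * ω (h k) with hf
    have hstep : ∀ k : Fin n, f (k + 1) = f k := by
      intro k
      have hk := hc k
      simp only [map_mul, map_inv] at hk
      show (ω (g (k + 1)))⁻¹ * ω (h (k + 1)) = (ω (g k))⁻¹ * ω (h k)
      calc (ω (g (k + 1)))⁻¹ * ω (h (k + 1))
          = (ω (g k))⁻¹ * (ω (g k) * (ω (g (k + 1)))⁻¹) * ω (h (k + 1)) := by group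
        _ = (ω (g k))⁻¹ * (ω (h k) * (ω (h (k + 1)))⁻¹) * ω (h (k + 1)) := by rw [hk]
        _ = (ω (g k))⁻¹ * ω (h k) := by group
    open Fin.NatCast Fin.CommRing in
    have hconst : ∀ (j : ℕ) (k : Fin n), f (k + (j : Fin n)) = f k := by
      intro j
      induction j with
      | zero => simp
      | succ j ih =>
        intro k
        have : k + ((j + 1 : ℕ) : Fin n) = (k + 1) + (j : Fin n) := by
          push_cast; ring
        rw [this, ih, hstep]
    open Fin.NatCast Fin.CommRing in
    have hrr : f r' = f r := by
      have h1 : r + (((r' - r : Fin n).val : ℕ) : Fin n) = r' := by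
        rw [Fin.cast_val_eq_self, add_comm, sub_add_cancel]
      have := hconst (r' - r : Fin n).val r
      rw [h1] at this
      exact this
    have hv : ((ω (g r')) s)⁻¹ * (ω (h r')) s = ((ω (g r)) s)⁻¹ * (ω (h r)) s := by
      have := DFunLike.congr_fun hrr s
      simpa [hf] using this
    have hC : ((ω (g r') s : ℂ))⁻¹ * (ω (h r') s : ℂ)
        = ((ω (g r) s : ℂ))⁻¹ * (ω (h r) s : ℂ) := by
      have := congrArg (fun x : Circle => (x : ℂ)) hv
      simpa using this
    have hne : ∀ x : Circle, (x : ℂ) ≠ 0 := fun x => Circle.coe_ne_zero x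
    field_simp at hC
    field_simp
    linear_combination hC
  · rfl
end
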